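/- Let (X,T) and (Y,S) be topological dynamical systems and let z ∈ Y be a recurrent point. Then for every x ∈ X there exists a point y in the orbit closure of x such that (x,y) is a proximal pair in (X,T) and (y,z) is a recurrent point of the product system (X×Y, T×S). -/

import Mathlib

open Set Filter Topology Function

namespace PaperFormal

/-- The return-time set `N(x,U) = {n ∈ ℤ₊ : Tⁿ x ∈ U}`. -/
def retTimes {X : Type} (T : X → X) (x : X) (U : Set X) : Set ℕ :=
  {n : ℕ | T^[n] x ∈ U}

/-- A point is recurrent if `N(x,U)` is infinite for every neighborhood `U` of `x`. -/
def RecurrentPt {X : Type} [TopologicalSpace X] (T : X → X) (x : X) : Prop :=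
  ∀ U ∈ nhds x, (retTimes T x U).Infinite

/-- The (forward) orbit closure of a point. -/
def orbitClosure {X : Type} [TopologicalSpace X] (T : X → X) (x : X) : Set X :=
  closure (Set.range fun n : ℕ => T^[n] x)

/-- A pair `(x,y)` is proximal if `lim T^{nᵢ} x = lim T^{nᵢ} y` along some sequence `nᵢ`. -/
def ProximalPair {X : Type} [TopologicalSpace X] (T : X → X) (x y : X) : Prop :=
  ∃ (u : ℕ → ℕ) (z : X),
    Tendsto (fun i => T^[u i] x) atTop (nhds z) ∧
    Tendsto (fun i => T^[u i] y) atTop (nhds z)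

/-- A point `x` is distal if every `y` in its orbit closure proximal to `x` equals `x`. -/
def DistalPt {X : Type} [TopologicalSpace X] (T : X → X) (x : X) : Prop :=
  ∀ y ∈ orbitClosure T x, ProximalPair T x y → y = x

/-- `A` is a minimal set: nonempty, closed, invariant, with no proper such subset. -/
def IsMinimalSet {X : Type} [TopologicalSpace X] (T : X → X) (A : Set X) : Prop :=
  A.Nonempty ∧ IsClosed A ∧ Set.MapsTo T A A ∧
    ∀ B ⊆ A, B.Nonempty → IsClosed B → Set.MapsTo T B B → B = A

/-- A point is minimal (almost periodic) if its orbit closure is a minimal set. -/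
def IsMinimalPt {X : Type} [TopologicalSpace X] (T : X → X) (x : X) : Prop :=
  IsMinimalSet T (orbitClosure T x)

/-- A minimal system: no proper nonempty closed invariant subset. -/
def MinimalSys {X : Type} [TopologicalSpace X] (T : X → X) : Prop :=
  ∀ B : Set X, B.Nonempty → IsClosed B → Set.MapsTo T B B → B = Set.univ

/-- A transitive system: `N(U,V)` is infinite for all opene `U`, `V`. -/
def TransitiveSys {X : Type} [TopologicalSpace X] (T : X → X) : Prop :=
  ∀ U V : Set X, IsOpen U → IsOpen V → U.Nonempty → V.Nonempty →
    {n : ℕ | (U ∩ T^[n] ⁻¹' V).Nonempty}.Infinite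

/-- Transitivity of the subsystem on an invariant subset `A` (relative open sets). -/
def TransitiveOn {X : Type} [TopologicalSpace X] (T : X → X) (A : Set X) : Prop :=
  ∀ U V : Set X, IsOpen U → IsOpen V → (U ∩ A).Nonempty → (V ∩ A).Nonempty →
    {n : ℕ | (U ∩ A ∩ T^[n] ⁻¹' V).Nonempty}.Infinite

/-- A transitive point: a point with dense forward orbit. -/
def TransPt {X : Type} [TopologicalSpace X] (T : X → X) (x : X) : Prop :=
  Dense (Set.range fun n : ℕ => T^[n] x)

/-- Finite sums of the sequence `p` over nonempty finite index sets contained in `[n,∞)`. -/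
def FSfrom (p : ℕ → ℕ) (n : ℕ) : Set ℕ :=
  {m | ∃ α : Finset ℕ, α.Nonempty ∧ (∀ i ∈ α, n ≤ i) ∧ m = ∑ i ∈ α, p i}

/-- Finite sums of the sequence `p` over nonempty finite index sets. -/
def FS (p : ℕ → ℕ) : Set ℕ := FSfrom p 0

/-- An IP set: a set containing all finite sums of some sequence of natural numbers. -/
def IPSet (A : Set ℕ) : Prop :=
  ∃ p : ℕ → ℕ, (∀ i, 0 < p i) ∧ FS p ⊆ A

/-- An IP* set: a set meeting every IP set. -/
def IPStar (A : Set ℕ) : Prop :=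
  ∀ B : Set ℕ, IPSet B → (A ∩ B).Nonempty

/-- A syndetic set: a set with bounded gaps. -/
def Syndetic (S : Set ℕ) : Prop :=
  ∃ N : ℕ, ∀ m : ℕ, ∃ k ∈ S, m ≤ k ∧ k ≤ m + N

/-- A thick set: a set containing arbitrarily long runs of consecutive integers. -/
def Thick (S : Set ℕ) : Prop :=
  ∀ n : ℕ, ∃ m : ℕ, ∀ i ≤ n, m + i ∈ S

/-- A piecewise syndetic set: an intersection of a syndetic set with a thick set. -/
def PiecewiseSyndetic (A : Set ℕ) : Prop :=
  ∃ S₁ S₂ : Set ℕ, Syndetic S₁ ∧ Thick S₂ ∧ A = S₁ ∩ S₂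

/-- A thickly syndetic set: a set meeting every piecewise syndetic set. -/
def ThicklySyndetic (A : Set ℕ) : Prop :=
  ∀ B : Set ℕ, PiecewiseSyndetic B → (A ∩ B).Nonempty

/-- `x` is `F`-recurrent for the family `F` if `N(x,U) ∈ F` for every neighborhood `U`. -/
def FRecurrentPt {X : Type} [TopologicalSpace X] (F : Set (Set ℕ)) (T : X → X) (x : X) :
    Prop :=
  ∀ U ∈ nhds x, retTimes T x U ∈ F

/-- `x` is `F`-product recurrent: `(x,y)` is recurrent for every `F`-recurrent point `y`
in any topological dynamical system `(Y,S)`. -/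
def FProductRecurrent {X : Type} [TopologicalSpace X] (F : Set (Set ℕ)) (T : X → X)
    (x : X) : Prop :=
  ∀ (Y : Type) [MetricSpace Y] [CompactSpace Y] (S : Y → Y),
    Continuous S → Function.Surjective S →
      ∀ y : Y, FRecurrentPt F S y → RecurrentPt (Prod.map T S) (x, y)

/-- A joining of `(X,T)` and `(Y,S)`: a nonempty closed invariant subset of `X × Y`
projecting onto both coordinates. -/
def Joining {X Y : Type} [TopologicalSpace X] [TopologicalSpace Y]
    (T : X → X) (S : Y → Y) (J : Set (X × Y)) : Prop :=
  J.Nonempty ∧ IsClosed J ∧ Set.MapsTo (Prod.map T S) J J ∧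
    Prod.fst '' J = Set.univ ∧ Prod.snd '' J = Set.univ

/-- Two systems are disjoint if their only joining is the full product. -/
def DisjointSys {X Y : Type} [TopologicalSpace X] [TopologicalSpace Y]
    (T : X → X) (S : Y → Y) : Prop :=
  ∀ J : Set (X × Y), Joining T S J → J = Set.univ

/-- Property (★) of a point: for each neighborhood `V` of `x` there is `n` such that for
every finite set `S` whose distinct elements are at distance `≥ n`, some common shift `ℓ`
puts all of `T^{s+ℓ} x`, `s ∈ S`, inside `V`. -/
def StarProp {X : Type} [TopologicalSpace X] (T : X → X) (x : X) : Prop :=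
  ∀ V ∈ nhds x, ∃ n : ℕ, ∀ S : Finset ℕ,
    (∀ s ∈ S, ∀ t ∈ S, s < t → n ≤ t - s) →
      ∃ ℓ : ℕ, ∀ s ∈ S, T^[s + ℓ] x ∈ V

/-- `F` is an independence set for the pair `(U₀, U₁)`. -/
def IndepSet {X : Type} (T : X → X) (U₀ U₁ : Set X) (F : Set ℕ) : Prop :=
  ∀ J : Finset ℕ, ↑J ⊆ F → J.Nonempty → ∀ s : ℕ → Bool,
    (⋂ j ∈ J, T^[j] ⁻¹' (if s j then U₁ else U₀)).Nonempty

attribute [local instance] Ultrafilter.add Ultrafilter.addSemigroup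

noncomputable def ulim {Z : Type} [TopologicalSpace Z] [CompactSpace Z]
    (p : Ultrafilter ℕ) (f : ℕ → Z) : Z :=
  (isCompact_univ.ultrafilter_le_nhds (p.map f)
    (le_principal_iff.mpr univ_mem)).choose

lemma ulim_tendsto {Z : Type} [TopologicalSpace Z] [CompactSpace Z]
    (p : Ultrafilter ℕ) (f : ℕ → Z) : Tendsto f ↑p (nhds (ulim p f)) :=
  (isCompact_univ.ultrafilter_le_nhds (p.map f)
    (le_principal_iff.mpr univ_mem)).choose_spec.2

lemma ulim_eq {Z : Type} [TopologicalSpace Z] [CompactSpace Z] [T2Space Z]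
    {p : Ultrafilter ℕ} {f : ℕ → Z} {a : Z}
    (h : Tendsto f ↑p (nhds a)) : ulim p f = a :=
  tendsto_nhds_unique (ulim_tendsto p f) h

lemma ulim_add {Z : Type} [TopologicalSpace Z] [CompactSpace Z] [T2Space Z]
    (T : Z → Z) (hT : Continuous T) (p q : Ultrafilter ℕ) (x : Z) :
    ulim (p + q) (fun n => T^[n] x)
      = ulim p (fun n => T^[n] (ulim q (fun m => T^[m] x))) := by
  set w := ulim q (fun m => T^[m] x) with hw
  apply ulim_eq
  rw [Filter.tendsto_def]
  intro U hU
  rcases mem_nhds_iff.mp hU with ⟨V, hVU, hVopen, hyV⟩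
  have key : ∀ᶠ k in ↑(p + q), T^[k] x ∈ V := by
    rw [Ultrafilter.eventually_add]
    have h1 : ∀ᶠ n in ↑p, T^[n] w ∈ V :=
      ulim_tendsto p (fun n => T^[n] w) (hVopen.mem_nhds hyV)
    filter_upwards [h1] with n hn
    have h2 : Tendsto (fun m => T^[n] (T^[m] x)) ↑q (nhds (T^[n] w)) :=
      ((hT.iterate n).tendsto w).comp (ulim_tendsto q (fun m => T^[m] x))
    have h3 : ∀ᶠ m in ↑q, T^[n] (T^[m] x) ∈ V := h2 (hVopen.mem_nhds hn)
    filter_upwards [h3] with m hm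
    rw [iterate_add_apply]
    exact hm
  exact Filter.mem_of_superset key fun k hk => hVU hk

/-- If `z` is a recurrent point of `(Y,S)`, then for every `x ∈ X` there is
`y` in the orbit closure of `x` such that `(x,y)` is proximal and `(y,z)` is a recurrent
point of the product system. -/
theorem statement_2 {X Y : Type} [MetricSpace X] [CompactSpace X]
    [MetricSpace Y] [CompactSpace Y]
    (T : X → X) (hTc : Continuous T) (hTs : Function.Surjective T)
    (S : Y → Y) (hSc : Continuous S) (hSs : Function.Surjective S)
    (z : Y) (hz : RecurrentPt S z) (x : X) :
    ∃ y ∈ orbitClosure T x,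
      ProximalPair T x y ∧ RecurrentPt (Prod.map T S) (y, z) := by
  classical
  set f : ℕ → Y := fun n => S^[n] z with hf
  -- the filter generated by cofinite sets and return-time sets of z is proper
  have hFne : (Filter.cofinite ⊓ Filter.comap f (nhds z)).NeBot := by
    rw [← Filter.forall_mem_nonempty_iff_neBot]
    intro s hs
    rcases Filter.mem_inf_iff.mp hs with ⟨t₁, ht₁, t₂, ht₂, rfl⟩
    rcases Filter.mem_comap.mp ht₂ with ⟨U, hU, hUt₂⟩
    have hinf : (f ⁻¹' U).Infinite := hz U hU
    have : ((f ⁻¹' U) \ t₁ᶜ).Infinite := hinf.diff (Filter.mem_cofinite.mp ht₁)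
    rcases this.nonempty with ⟨n, hn1, hn2⟩
    exact ⟨n, by simpa using hn2, hUt₂ hn1⟩
  set u₀ : Ultrafilter ℕ := @Ultrafilter.of ℕ (Filter.cofinite ⊓ Filter.comap f (nhds z)) hFne with hu₀def
  have hu₀ : ↑u₀ ≤ Filter.cofinite ⊓ Filter.comap f (nhds z) := Ultrafilter.of_le _
  set A : Set (Ultrafilter ℕ) :=
    {p : Ultrafilter ℕ | (↑p : Filter ℕ) ≤ Filter.cofinite ∧ Tendsto f ↑p (nhds z)} with hA
  have hu₀A : u₀ ∈ A := by
    refine ⟨hu₀.trans inf_le_left, ?_⟩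
    rw [Filter.tendsto_iff_comap]
    exact hu₀.trans inf_le_right
  have hAclosed : IsClosed A := by
    have hAeq : A = (⋂ s ∈ (Filter.cofinite : Filter ℕ).sets, {p : Ultrafilter ℕ | s ∈ p}) ∩
        ⋂ U ∈ nhds z, {p : Ultrafilter ℕ | f ⁻¹' U ∈ p} := by
      ext p
      simp only [hA, Set.mem_inter_iff, Set.mem_iInter, Set.mem_setOf_eq, Filter.le_def,
        Filter.tendsto_def, Filter.mem_sets, Ultrafilter.mem_coe]
    rw [hAeq]
    exact (isClosed_biInter fun s _ => ultrafilter_isClosed_basic s).inter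
      (isClosed_biInter fun U _ => ultrafilter_isClosed_basic _)
  have hAadd : ∀ p ∈ A, ∀ q ∈ A, p + q ∈ A := by
    intro p hp q hq
    constructor
    · intro s hs
      have hmem : ∀ᶠ k in ↑(p + q), k ∈ s := by
        rw [Ultrafilter.eventually_add]
        refine Filter.Eventually.of_forall fun n => ?_
        have hcof : {m | n + m ∈ s} ∈ (Filter.cofinite : Filter ℕ) := by
          rw [Filter.mem_cofinite]
          have : {m | n + m ∈ s}ᶜ ⊆ (fun m => n + m) ⁻¹' sᶜ := by
            intro m hm; exact hm
          exact Set.Finite.subset ((Filter.mem_cofinite.mp hs).preimage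
            ((add_right_injective n).injOn)) this
        exact hq.1 hcof
      exact hmem
    · have h1 : ulim q f = z := ulim_eq hq.2
      have h2 : ulim (p + q) f = z := by
        rw [hf, ulim_add S hSc p q z]
        rw [show (ulim q fun m => S^[m] z) = z from h1]
        exact ulim_eq hp.2
      have := ulim_tendsto (p + q) f
      rwa [h2] at this
  obtain ⟨u, huA, huu⟩ := exists_idempotent_in_compact_add_subsemigroup
    Ultrafilter.continuous_add_left A ⟨u₀, hu₀A⟩ hAclosed.isCompact hAadd
  -- the point y
  set g : ℕ → X := fun n => T^[n] x with hg
  set y : X := ulim u g with hy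
  have hyt : Tendsto g ↑u (nhds y) := ulim_tendsto u g
  have hyy : Tendsto (fun n => T^[n] y) ↑u (nhds y) := by
    have h1 : ulim u (fun n => T^[n] y) = y := by
      have := ulim_add T hTc u u x
      rw [huu] at this
      rw [← this]
    have := ulim_tendsto u (fun n => T^[n] y)
    rwa [h1] at this
  have huinf : ∀ s : Set ℕ, s ∈ u → s.Infinite := by
    intro s hs
    by_contra h
    rw [Set.not_infinite] at h
    have hsc : sᶜ ∈ u := huA.1 (by rw [Filter.mem_cofinite, compl_compl]; exact h)
    exact (Ultrafilter.compl_notMem_iff.mpr hs) hsc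
  refine ⟨y, ?_, ?_, ?_⟩
  · exact mem_closure_of_tendsto hyt (Filter.Eventually.of_forall fun n => Set.mem_range_self n)
  · -- proximality
    have hball : ∀ i : ℕ, ∃ n, T^[n] x ∈ Metric.ball y (1/((i:ℝ)+1)) ∧
        T^[n] y ∈ Metric.ball y (1/((i:ℝ)+1)) := by
      intro i
      have hpos : (0:ℝ) < 1/((i:ℝ)+1) := by positivity
      have h1 : ∀ᶠ n in ↑u, T^[n] x ∈ Metric.ball y (1/((i:ℝ)+1)) :=
        hyt (Metric.ball_mem_nhds y hpos)
      have h2 : ∀ᶠ n in ↑u, T^[n] y ∈ Metric.ball y (1/((i:ℝ)+1)) :=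
        hyy (Metric.ball_mem_nhds y hpos)
      exact (h1.and h2).exists
    choose v hv1 hv2 using hball
    have hseq : ∀ w : X, (∀ i : ℕ, T^[v i] w ∈ Metric.ball y (1/((i:ℝ)+1))) →
        Tendsto (fun i => T^[v i] w) atTop (nhds y) := by
      intro w hw
      rw [tendsto_iff_dist_tendsto_zero]
      refine squeeze_zero (g := fun i : ℕ => 1/((i:ℝ)+1)) (fun i => dist_nonneg)
        (fun i => le_of_lt (Metric.mem_ball.mp (hw i))) ?_
      exact tendsto_one_div_add_atTop_nhds_zero_nat
    exact ⟨v, y, hseq x hv1, hseq y hv2⟩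
  · -- recurrence of (y, z)
    intro U hU
    have ht : Tendsto (fun n => (T^[n] y, S^[n] z)) ↑u (nhds (y, z)) :=
      hyy.prodMk_nhds huA.2
    have hmem : retTimes (Prod.map T S) (y, z) U ∈ u := by
      have h1 := ht hU
      have h2 : retTimes (Prod.map T S) (y, z) U =
          (fun n => (T^[n] y, S^[n] z)) ⁻¹' U := by
        ext n
        simp [retTimes, Prod.map_iterate]
      rwa [h2]
    exact huinf _ hmem


end PaperFormal
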